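/- Let (Ω, F, P) be a probability space with filtration {F_i}, T a stopping time, ε > 0, and {X_i} a nonnegative integrable adapted process satisfying E[X_{i+1} | F_i] ≤ X_i − ε·1_{T > i} for all i. Then E[T] ≤ E[X_0]/ε. -/

import Mathlib

open MeasureTheory Filter
open scoped ENNReal

lemma enat_toENNReal_eq_tsum (n : ℕ∞) :
    (n : ℝ≥0∞) = ∑' i : ℕ, if (i : ℕ∞) < n then 1 else 0 := by
  induction n using ENat.recTopCoe with
  | top =>
    simp only [lt_top_iff_ne_top, ENat.coe_ne_top, ne_eq, not_false_eq_true, if_true]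
    simp [ENNReal.tsum_const_eq_top_of_ne_zero]
  | coe k =>
    rw [tsum_eq_sum (s := Finset.range k) (fun i hi => by
      have h : ¬ i < k := fun h => hi (Finset.mem_range.2 h)
      simp [Nat.cast_lt, h])]
    rw [Finset.sum_congr rfl (fun i hi => if_pos (by
      exact_mod_cast Finset.mem_range.1 hi))]
    simp

/-- Quantitative 1-dimensional ranking supermartingale bound: the expected value
of the stopping time is at most `E[X 0] / ε`. -/
theorem stmt_3 {Ω : Type*} {m0 : MeasurableSpace Ω} (P : Measure Ω) [IsProbabilityMeasure P]
    (ℱ : Filtration ℕ m0) (X : ℕ → Ω → ℝ) (hadp : Adapted ℱ X)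
    (hnn : ∀ i ω, 0 ≤ X i ω) (hint : ∀ i, Integrable (X i) P)
    (T : Ω → ℕ∞) (hT : ∀ i : ℕ, MeasurableSet[ℱ i] {ω | T ω ≤ (i : ℕ∞)})
    (ε : ℝ) (hε : 0 < ε)
    (hrank : ∀ i : ℕ, ∀ᵐ ω ∂P,
      (P[X (i + 1) | ℱ i]) ω ≤ X i ω - Set.indicator {ω' | (i : ℕ∞) < T ω'} (fun _ => ε) ω) :
    ∫⁻ ω, (T ω : ℝ≥0∞) ∂P ≤ ENNReal.ofReal ((∫ ω, X 0 ω ∂P) / ε) := by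
  classical
  set S : ℕ → Set Ω := fun i => {ω | (i : ℕ∞) < T ω} with hS
  have hSmeas : ∀ i, MeasurableSet (S i) := by
    intro i
    have h : S i = {ω | T ω ≤ (i : ℕ∞)}ᶜ := by
      ext ω; simp [hS, not_le]
    rw [h]
    exact (ℱ.le i _ (hT i)).compl
  have hstep : ∀ i, ∫ ω, X (i+1) ω ∂P + ε * (P (S i)).toReal ≤ ∫ ω, X i ω ∂P := by
    intro i
    have hind : Integrable ((S i).indicator (fun _ => ε)) P :=
      (integrable_indicator_iff (hSmeas i)).2
        (integrableOn_const (measure_ne_top _ _) enorm_ne_top)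
    have h1 : ∫ ω, (P[X (i+1)|ℱ i]) ω ∂P
        ≤ ∫ ω, (X i ω - (S i).indicator (fun _ => ε) ω) ∂P :=
      integral_mono_ae integrable_condExp ((hint i).sub hind) (hrank i)
    rw [integral_condExp (ℱ.le i)] at h1
    rw [integral_sub (hint i) hind, integral_indicator_const ε (hSmeas i),
      smul_eq_mul, measureReal_def] at h1
    nlinarith [h1]
  have key : ∀ n, ∫ ω, X n ω ∂P + ε * ∑ i ∈ Finset.range n, (P (S i)).toReal
      ≤ ∫ ω, X 0 ω ∂P := by
    intro n
    induction n with
    | zero => simp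
    | succ n ih =>
      rw [Finset.sum_range_succ, mul_add]
      have := hstep n
      linarith
  have hsum : ∀ n, ∑ i ∈ Finset.range n, (P (S i)).toReal ≤ (∫ ω, X 0 ω ∂P) / ε := by
    intro n
    have hx : 0 ≤ ∫ ω, X n ω ∂P := integral_nonneg (hnn n)
    rw [le_div_iff₀ hε]
    nlinarith [key n]
  have heq : ∫⁻ ω, (T ω : ℝ≥0∞) ∂P = ∑' i : ℕ, P (S i) := by
    have hpt : ∀ ω, (T ω : ℝ≥0∞) = ∑' i : ℕ, (S i).indicator (fun _ => (1:ℝ≥0∞)) ω := by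
      intro ω
      rw [enat_toENNReal_eq_tsum (T ω)]
      congr 1
      ext i
      simp [Set.indicator, hS, Set.mem_setOf_eq]
    simp_rw [hpt]
    rw [lintegral_tsum (fun i => (measurable_const.indicator (hSmeas i)).aemeasurable)]
    congr 1
    ext i
    rw [lintegral_indicator_const (hSmeas i), one_mul]
  rw [heq, ENNReal.tsum_eq_iSup_sum]
  apply iSup_le
  intro s
  obtain ⟨n, hn⟩ := s.exists_nat_subset_range
  calc ∑ i ∈ s, P (S i) ≤ ∑ i ∈ Finset.range n, P (S i) :=
        Finset.sum_le_sum_of_subset hn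
    _ = ENNReal.ofReal (∑ i ∈ Finset.range n, (P (S i)).toReal) := by
        rw [ENNReal.ofReal_sum_of_nonneg (fun i _ => ENNReal.toReal_nonneg)]
        exact Finset.sum_congr rfl
          (fun i _ => (ENNReal.ofReal_toReal (measure_ne_top P _)).symm)
    _ ≤ ENNReal.ofReal ((∫ ω, X 0 ω ∂P) / ε) := ENNReal.ofReal_le_ofReal (hsum n)
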